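/- arXiv:1903.06967 — 3 statements merged into one kernel-verified Lean document; each statement's English description precedes it below -/
import Mathlib

section
/- Let f be a homogeneous polynomial of degree d ≥ 2 in the n+1 variables x_0,…,x_n over ℂ, and let P ∈ ℂ^{n+1} be a smooth point of V(f), i.e. f(P) = 0 and the gradient (∂f/∂x_0(P),…,∂f/∂x_n(P)) is nonzero. Let B_P be the Hessian bilinear form of f at P and T_P the tangent space at P. Then rank H(f)(P) = rank(B_P restricted to T_P) + 2, where rank H(f)(P) is the rank of the evaluated Hessian matrix and the rank of the restricted bilinear form is its rank as a bilinear form on the n-dimensional space T_P. (Equivalently: the rank of the second fundamental form II_P of V(f) at P equals rank H(f)(P) − 2.) -/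
open MvPolynomial

/-- The Hessian matrix `H(f)` of a polynomial in the `n+1` variables `x_0, …, x_n`:
the `(n+1)×(n+1)` matrix of second partial derivatives `∂²f/∂x_i∂x_j`. -/
noncomputable def hessianMatrix (n : ℕ) (f : MvPolynomial (Fin (n + 1)) ℂ) :
    Matrix (Fin (n + 1)) (Fin (n + 1)) (MvPolynomial (Fin (n + 1)) ℂ) :=
  fun i j => pderiv i (pderiv j f)

/-- The Hessian polynomial `h(f) = det H(f)`. -/
noncomputable def hessianPoly (n : ℕ) (f : MvPolynomial (Fin (n + 1)) ℂ) :
    MvPolynomial (Fin (n + 1)) ℂ :=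
  (hessianMatrix n f).det

/-- The tangent space `T_P = {v ∈ ℂ^{n+1} : ∑ i, v i * ∂f/∂x_i(P) = 0}`. -/
noncomputable def tangentSpace (n : ℕ) (f : MvPolynomial (Fin (n + 1)) ℂ)
    (P : Fin (n + 1) → ℂ) : Submodule ℂ (Fin (n + 1) → ℂ) where
  carrier := {v | ∑ i, v i * eval P (pderiv i f) = 0}
  add_mem' := by
    intro a b ha hb
    simp only [Set.mem_setOf_eq, Pi.add_apply, add_mul, Finset.sum_add_distrib] at *
    simp [ha, hb]
  zero_mem' := by simp
  smul_mem' := by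
    intro c a ha
    simp only [Set.mem_setOf_eq, Pi.smul_apply, smul_eq_mul, mul_assoc, ← Finset.mul_sum] at *
    simp [ha]

/-- The Hessian bilinear form at `P`:
`B_P(v, w) = ∑ i j, v i * w j * (∂²f/∂x_i∂x_j)(P)`. -/
noncomputable def hessianForm (n : ℕ) (f : MvPolynomial (Fin (n + 1)) ℂ)
    (P : Fin (n + 1) → ℂ) : LinearMap.BilinForm ℂ (Fin (n + 1) → ℂ) :=
  Matrix.toBilin' ((hessianMatrix n f).map (eval P))

/-- The rank of a bilinear form on a module: the dimension of the image of the
associated linear map `M →ₗ (M →ₗ ℂ)`. -/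
noncomputable def bilinRank {M : Type*} [AddCommGroup M] [Module ℂ M]
    (B : LinearMap.BilinForm ℂ M) : ℕ :=
  Module.finrank ℂ (LinearMap.range B)


section AuxLemmas
open Finsupp Module LinearMap Matrix

lemma pderiv_comm' {m : ℕ} (i j : Fin m) (f : MvPolynomial (Fin m) ℂ) :
    pderiv i (pderiv j f) = pderiv j (pderiv i f) := by
  induction f using MvPolynomial.induction_on' with
  | add p q hp hq => simp [map_add, hp, hq]
  | monomial s a =>
    rcases eq_or_ne i j with rfl | hij
    · rfl
    · simp only [pderiv_monomial, tsub_right_comm]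
      congr 1
      rw [Finsupp.tsub_apply, Finsupp.tsub_apply, Finsupp.single_apply, Finsupp.single_apply,
        if_neg hij, if_neg (Ne.symm hij)]
      push_cast [Nat.sub_zero]
      ring

lemma euler' {m : ℕ} (d : ℕ) (f : MvPolynomial (Fin m) ℂ) (hhom : f.IsHomogeneous d) :
    ∑ i, X i * pderiv i f = C (d : ℂ) * f := by
  conv_lhs => rw [f.as_sum]
  conv_rhs => rw [f.as_sum]
  rw [Finset.mul_sum]
  simp only [map_sum, Finset.mul_sum]
  rw [Finset.sum_comm]
  refine Finset.sum_congr rfl fun s hs => ?_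
  have hdeg : ∑ i, (s i : ℂ) = (d : ℂ) := by
    have h1 := hhom (MvPolynomial.mem_support_iff.mp hs)
    rw [Finsupp.weight_apply, Finsupp.sum_fintype _ _ (fun _ => rfl)] at h1
    simp only [Pi.one_apply, smul_eq_mul, mul_one] at h1
    exact_mod_cast congrArg (Nat.cast : ℕ → ℂ) h1
  have key : ∀ i : Fin m, X i * pderiv i (monomial s (coeff s f))
      = monomial s (coeff s f * (s i : ℂ)) := by
    intro i
    rcases Nat.eq_zero_or_pos (s i) with h | h
    · simp [pderiv_monomial, h]
    · rw [pderiv_monomial, X, monomial_mul, one_mul, add_tsub_cancel_of_le]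
      exact Finsupp.single_le_iff.mpr h
  simp only [key]
  rw [C_mul_monomial, ← map_sum, ← Finset.mul_sum, hdeg, mul_comm]

lemma euler2' {m : ℕ} (d : ℕ) (f : MvPolynomial (Fin m) ℂ) (hhom : f.IsHomogeneous d)
    (j : Fin m) :
    ∑ i, X i * pderiv i (pderiv j f) = C ((d : ℂ) - 1) * pderiv j f := by
  have h := congrArg (pderiv j) (euler' d f hhom)
  rw [map_sum] at h
  have hterm : ∀ i : Fin m, pderiv j (X i * pderiv i f)
      = (if i = j then pderiv j f else 0) + X i * pderiv j (pderiv i f) := by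
    intro i
    rw [pderiv_mul]
    congr 1
    rcases eq_or_ne i j with rfl | hij
    · simp
    · simp [pderiv_X_of_ne (Ne.symm hij), hij]
  simp only [hterm, Finset.sum_add_distrib, Finset.sum_ite_eq', Finset.mem_univ, if_true,
    pderiv_C_mul] at h
  have h2 : ∑ i, X i * pderiv j (pderiv i f) = C (d : ℂ) * pderiv j f - pderiv j f := by
    linear_combination h
  calc ∑ i, X i * pderiv i (pderiv j f) = ∑ i, X i * pderiv j (pderiv i f) := by
        refine Finset.sum_congr rfl fun i _ => ?_
        rw [pderiv_comm']
    _ = C ((d : ℂ) - 1) * pderiv j f := by rw [h2, map_sub]; ring_nf; rw [_root_.map_one]; ring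

set_option synthInstance.maxHeartbeats 1000000 in
set_option maxHeartbeats 1000000 in
lemma abstract_rank {V : Type*} [AddCommGroup V] [Module ℂ V] [FiniteDimensional ℂ V]
    (B : LinearMap.BilinForm ℂ V) (hsymm : ∀ x y, B x y = B y x)
    (P : V) (hφ : B P ≠ 0) (hPP : B P P = 0) :
    Module.finrank ℂ (LinearMap.range B) =
      Module.finrank ℂ (LinearMap.range (B.restrict (LinearMap.ker (B P)))) + 2 := by
  set φ : V →ₗ[ℂ] ℂ := B P with hφdef
  set T : Submodule ℂ V := LinearMap.ker φ with hTdef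
  obtain ⟨Q, hQ⟩ : ∃ Q, φ Q ≠ 0 := by
    by_contra h
    push_neg at h
    exact hφ (LinearMap.ext h)
  -- T ⊔ span Q = ⊤
  have hsup : T ⊔ Submodule.span ℂ {Q} = ⊤ := by
    rw [eq_top_iff]
    intro x _
    refine Submodule.mem_sup.mpr ⟨x - (φ x / φ Q) • Q, ?_, (φ x / φ Q) • Q,
      Submodule.smul_mem _ _ (Submodule.mem_span_singleton_self Q), by abel⟩
    rw [LinearMap.mem_ker, map_sub,  _root_.map_smul, smul_eq_mul]
    field_simp
    ring
  set S : Submodule ℂ (V →ₗ[ℂ] ℂ) := Submodule.map B T with hSdef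
  have hST : ∀ ψ ∈ S, ψ P = 0 := by
    rintro ψ ⟨t, ht, rfl⟩
    rw [hsymm]
    exact ht
  have hBQP : B Q P ≠ 0 := by rw [hsymm]; exact hQ
  have hBQ : B Q ≠ 0 := fun h => hBQP (by rw [h]; rfl)
  -- range B = S ⊔ span {B Q}
  have hrange : LinearMap.range B = S ⊔ Submodule.span ℂ {B Q} := by
    rw [← Submodule.map_top, ← hsup, Submodule.map_sup, Submodule.map_span,
      Set.image_singleton]
  -- finrank range B = finrank S + 1
  have hSBQ : S ⊓ Submodule.span ℂ {B Q} = ⊥ := by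
    rw [eq_bot_iff]
    rintro x ⟨hxS, hxW⟩
    obtain ⟨c, rfl⟩ := Submodule.mem_span_singleton.mp hxW
    have : c * B Q P = 0 := hST _ hxS
    rcases mul_eq_zero.mp this with hc | hc
    · simp [hc]
    · exact absurd hc hBQP
  have h1 : Module.finrank ℂ (LinearMap.range B) = Module.finrank ℂ S + 1 := by
    have h2 := Submodule.finrank_sup_add_finrank_inf_eq S (Submodule.span ℂ {B Q})
    rw [hSBQ, finrank_bot, add_zero, finrank_span_singleton hBQ] at h2
    rw [hrange, h2]
  -- restriction map
  set r : (V →ₗ[ℂ] ℂ) →ₗ[ℂ] (T →ₗ[ℂ] ℂ) := T.subtype.dualMap with hrdef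
  have hrres : LinearMap.range (B.restrict T) = Submodule.map r S := by
    ext ψ
    constructor
    · rintro ⟨t, rfl⟩
      exact ⟨B t, ⟨t, t.2, rfl⟩, by ext s; rfl⟩
    · rintro ⟨ψ', ⟨t, ht, rfl⟩, rfl⟩
      exact ⟨⟨t, ht⟩, by ext s; rfl⟩
  -- φ ∈ S and r φ = 0
  have hφS : φ ∈ S := ⟨P, hPP, rfl⟩
  have hrφ : r φ = 0 := by
    ext t
    exact t.2
  -- rank-nullity for ρ = r restricted to S
  set ρ : S →ₗ[ℂ] (T →ₗ[ℂ] ℂ) := r.domRestrict S with hρdef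
  have hrank : Module.finrank ℂ S
      = Module.finrank ℂ (LinearMap.range ρ) + Module.finrank ℂ (LinearMap.ker ρ) :=
    (LinearMap.finrank_range_add_finrank_ker ρ).symm
  have hrangeρ : LinearMap.range ρ = Submodule.map r S := LinearMap.range_domRestrict S r
  -- ker ρ ≃ ℂ
  have hker1 : Module.finrank ℂ (LinearMap.ker ρ) = 1 := by
    let ev : LinearMap.ker ρ →ₗ[ℂ] ℂ :=
      { toFun := fun x => ((x : S) : V →ₗ[ℂ] ℂ) Q
        map_add' := fun x y => rfl
        map_smul' := fun c x => rfl }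
    have hinj : Function.Injective ev := by
      intro x y hxy
      have hd : ∀ z : LinearMap.ker ρ, ∀ v : V,
          ((z : S) : V →ₗ[ℂ] ℂ) v = (((z : S) : V →ₗ[ℂ] ℂ) Q) * (φ v / φ Q) := by
        intro z v
        have hv : v ∈ T ⊔ Submodule.span ℂ {Q} := hsup ▸ Submodule.mem_top
        obtain ⟨t, ht, q, hq, rfl⟩ := Submodule.mem_sup.mp hv
        obtain ⟨c, rfl⟩ := Submodule.mem_span_singleton.mp hq
        have hzT : ∀ s : V, s ∈ T → ((z : S) : V →ₗ[ℂ] ℂ) s = 0 := by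
          intro s hs
          have := z.2
          rw [LinearMap.mem_ker] at this
          have := congrArg (fun ψ => ψ ⟨s, hs⟩) this
          exact this
        have hφt : φ t = 0 := ht
        rw [map_add,  _root_.map_smul, hzT t ht, map_add,  _root_.map_smul, hφt, smul_eq_mul, smul_eq_mul]
        field_simp
        ring
      apply Subtype.ext
      apply Subtype.ext
      ext v
      rw [hd x v, hd y v, show ((x : S) : V →ₗ[ℂ] ℂ) Q = _ from hxy]
      rfl
    have hsurj : Function.Surjective ev := by
      intro c
      refine ⟨⟨⟨(c / φ Q) • φ, S.smul_mem _ hφS⟩, ?_⟩, ?_⟩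
      · rw [LinearMap.mem_ker]
        show ρ ⟨(c / φ Q) • φ, _⟩ = 0
        rw [hρdef, LinearMap.domRestrict_apply,  _root_.map_smul, hrφ, smul_zero]
      · show ((c / φ Q) • φ) Q = c
        rw [LinearMap.smul_apply, smul_eq_mul]
        field_simp
    rw [(LinearEquiv.ofBijective ev ⟨hinj, hsurj⟩).finrank_eq, Module.finrank_self]
  rw [h1, hrank, hrangeρ, hker1, hrres]

lemma bilin_rank_eq {m : ℕ} (M : Matrix (Fin m) (Fin m) ℂ) :
    Module.finrank ℂ (LinearMap.range (Matrix.toBilin' M)) = M.rank := by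
  set e : (Fin m → ℂ) →ₗ[ℂ] ((Fin m → ℂ) →ₗ[ℂ] ℂ) := Matrix.toBilin' 1 with hedef
  have he : ∀ u w : Fin m → ℂ, e u w = dotProduct u w := by
    intro u w
    rw [hedef, Matrix.toBilin'_apply', Matrix.one_mulVec]
  have hinj : Function.Injective e := by
    intro u u' huu
    funext i
    have h2 : e u (Pi.single i 1) = e u' (Pi.single i 1) := by rw [huu]
    rw [he, he, dotProduct_single, dotProduct_single, mul_one, mul_one] at h2
    exact h2
  have hcomp : Matrix.toBilin' M = e ∘ₗ Matrix.mulVecLin Mᵀ := by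
    apply LinearMap.ext; intro v
    apply LinearMap.ext; intro w
    rw [Matrix.toBilin'_apply', LinearMap.comp_apply, Matrix.mulVecLin_apply, he,
      Matrix.dotProduct_mulVec, Matrix.mulVec_transpose]
  rw [hcomp, LinearMap.range_comp,
    ← (Submodule.equivMapOfInjective e hinj (LinearMap.range (Matrix.mulVecLin Mᵀ))).finrank_eq]
  exact Matrix.rank_transpose M

end AuxLemmas

/-- If `f` is homogeneous of degree `d ≥ 2` and `P` is a smooth point of `V(f)`
(`P ≠ 0`, `f(P) = 0`, gradient of `f` at `P` nonzero), then the rank of the evaluated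
Hessian matrix `H(f)(P)` equals the rank of the Hessian bilinear form `B_P` restricted to
the tangent space `T_P`, plus `2`.  (Equivalently, `rank II_P = rank H(f)(P) - 2`.) -/
theorem rank_hessianMatrix_eq_rank_restricted_add_two (n d : ℕ) (hd : 2 ≤ d)
    (f : MvPolynomial (Fin (n + 1)) ℂ) (hhom : f.IsHomogeneous d)
    (P : Fin (n + 1) → ℂ) (hP : P ≠ 0) (hfP : eval P f = 0)
    (hsm : ∃ i, eval P (pderiv i f) ≠ 0) :
    ((hessianMatrix n f).map (eval P)).rank =
      bilinRank ((hessianForm n f P).restrict (tangentSpace n f P)) + 2 := by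
  set M : Matrix (Fin (n + 1)) (Fin (n + 1)) ℂ := (hessianMatrix n f).map (eval P) with hMdef
  set B : LinearMap.BilinForm ℂ (Fin (n + 1) → ℂ) := hessianForm n f P with hBdef
  have hMeq : ∀ i j, M i j = eval P (pderiv i (pderiv j f)) := fun i j => rfl
  have hMsymm : ∀ i j, M i j = M j i := by
    intro i j
    rw [hMeq, hMeq, pderiv_comm']
  have hBapp : ∀ v w, B v w = ∑ i, ∑ j, v i * M i j * w j := fun v w =>
    Matrix.toBilin'_apply M v w
  set g : Fin (n + 1) → ℂ := fun i => eval P (pderiv i f) with hgdef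
  have hd1 : (d : ℂ) - 1 ≠ 0 := by
    intro h
    have : (d : ℂ) = 1 := by linear_combination h
    have : d = 1 := by exact_mod_cast this
    omega
  -- second-order Euler, evaluated
  have hcol : ∀ j, ∑ i, P i * M i j = ((d : ℂ) - 1) * g j := by
    intro j
    have h := congrArg (eval P) (euler2' d f hhom j)
    simp only [map_sum, _root_.map_mul, eval_X, eval_C, map_sub, _root_.map_one] at h
    exact h
  -- first-order Euler, evaluated
  have hrow : ∑ i, P i * g i = 0 := by
    have h := congrArg (eval P) (euler' d f hhom)
    simp only [map_sum, _root_.map_mul, eval_X, eval_C] at h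
    rw [hfP, mul_zero] at h
    exact h
  have hBP : ∀ v, B P v = ((d : ℂ) - 1) * ∑ j, v j * g j := by
    intro v
    rw [hBapp, Finset.sum_comm]
    rw [Finset.mul_sum]
    refine Finset.sum_congr rfl fun j _ => ?_
    rw [show ∑ i, P i * M i j * v j = (∑ i, P i * M i j) * v j from (Finset.sum_mul _ _ _).symm,
      hcol]
    ring
  -- symmetry
  have hsymm : ∀ v w, B v w = B w v := by
    intro v w
    rw [hBapp, hBapp, Finset.sum_comm]
    refine Finset.sum_congr rfl fun j _ => Finset.sum_congr rfl fun i _ => ?_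
    rw [hMsymm]
    ring
  -- B P ≠ 0
  obtain ⟨i₀, hi₀⟩ := hsm
  have hφ : B P ≠ 0 := by
    intro h
    have h2 : B P (Pi.single i₀ 1) = 0 := by rw [h]; rfl
    rw [hBP] at h2
    rcases mul_eq_zero.mp h2 with hc | hc
    · exact hd1 hc
    · rw [Finset.sum_eq_single i₀ (fun b _ hb => by simp [Pi.single_apply, hb])
        (fun h => absurd (Finset.mem_univ i₀) h)] at hc
      simp only [Pi.single_apply, if_pos rfl, if_true, one_mul] at hc
      exact hi₀ hc
  -- B P P = 0
  have hPP : B P P = 0 := by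
    rw [hBP]
    rw [show ∑ j, P j * g j = 0 from hrow, mul_zero]
  -- tangent space = ker (B P)
  have hT : tangentSpace n f P = LinearMap.ker (B P) := by
    ext v
    rw [LinearMap.mem_ker, hBP]
    constructor
    · intro hv
      rw [show ∑ j, v j * g j = 0 from hv, mul_zero]
    · intro hv
      rcases mul_eq_zero.mp hv with hc | hc
      · exact absurd hc hd1
      · exact hc
  rw [← bilin_rank_eq M, show Matrix.toBilin' M = B from rfl, hT, bilinRank]
  exact abstract_rank B hsymm P hφ hPP
end

section
/- Let f be a homogeneous polynomial of degree d ≥ 3 in the n+1 variables x_0,…,x_n over ℂ and let P be a smooth point of the hypersurface X = V(f). Then P is a parabolic point of X — i.e., the restriction of the Hessian bilinear form B_P to the tangent space T_P has rank strictly less than n − 1 (equivalently, the second fundamental form quadric II_P is degenerate) — if and only if h(f)(P) = 0, i.e. P lies on the Hessian hypersurface of X. Hence the locus of parabolic points of X, together with the singular locus, is exactly the intersection of X with its Hessian hypersurface. -/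
open MvPolynomial

/-! ### Auxiliary lemmas -/

section Aux

open Finsupp

/-- Partial derivatives commute. -/
lemma pderiv_pderiv_comm {σ : Type*} (i j : σ) (f : MvPolynomial σ ℂ) :
    pderiv i (pderiv j f) = pderiv j (pderiv i f) := by
  classical
  induction f using MvPolynomial.induction_on' with
  | add p q hp hq => simp [hp, hq]
  | monomial s a =>
    by_cases h : i = j
    · subst h; rfl
    · simp only [pderiv_monomial]
      have key : ∀ (k l : σ), k ≠ l → ((s - Finsupp.single k 1 : σ →₀ ℕ)) l = s l := by
        intro k l hkl
        rw [Finsupp.tsub_apply, Finsupp.single_eq_of_ne' hkl, Nat.sub_zero]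
      rw [key j i (Ne.symm h), key i j h]
      have hsub : s - Finsupp.single j 1 - Finsupp.single i 1
          = s - Finsupp.single i 1 - Finsupp.single j 1 := by
        ext a
        simp only [Finsupp.tsub_apply]
        omega
      rw [hsub]
      ring_nf

lemma degree_eq_sum_univ {m : ℕ} (s : Fin m →₀ ℕ) : s.degree = ∑ j : Fin m, s j := by
  rw [Finsupp.degree]
  exact Finset.sum_subset (Finset.subset_univ _) (fun x _ hx => Finsupp.notMem_support_iff.mp hx)

lemma degree_sub_single {m : ℕ} (s : Fin m →₀ ℕ) (i : Fin m) (h : s i ≠ 0) :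
    (s - Finsupp.single i 1).degree = s.degree - 1 := by
  rw [degree_eq_sum_univ, degree_eq_sum_univ]
  rw [← Finset.add_sum_erase _ s (Finset.mem_univ i),
    ← Finset.add_sum_erase _ _ (Finset.mem_univ i)]
  have h1 : ((s - Finsupp.single i 1 : Fin m →₀ ℕ)) i = s i - 1 := by
    rw [Finsupp.tsub_apply, Finsupp.single_eq_same]
  have h2 : ∑ j ∈ Finset.univ.erase i, ((s - Finsupp.single i 1 : Fin m →₀ ℕ)) j
      = ∑ j ∈ Finset.univ.erase i, s j := by
    refine Finset.sum_congr rfl fun j hj => ?_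
    rw [Finsupp.tsub_apply, Finsupp.single_eq_of_ne' (Finset.ne_of_mem_erase hj).symm,
      Nat.sub_zero]
  rw [h1, h2]
  omega

/-- Euler's identity for a monomial. -/
lemma euler_monomial {m : ℕ} (s : Fin m →₀ ℕ) (a : ℂ) :
    ∑ i : Fin m, X i * pderiv i (monomial s a) = s.degree • monomial s a := by
  classical
  have hterm : ∀ i : Fin m, X i * pderiv i (monomial s a) = s i • monomial s a := by
    intro i
    rw [pderiv_monomial]
    by_cases h : s i = 0
    · simp [h]
    · have hX : (X i : MvPolynomial (Fin m) ℂ) = monomial (Finsupp.single i 1) 1 := by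
        rw [MvPolynomial.X]
      rw [hX, monomial_mul, one_mul]
      have hadd : Finsupp.single i 1 + (s - Finsupp.single i 1) = s := by
        ext a
        simp only [Finsupp.add_apply, Finsupp.tsub_apply, Finsupp.single_apply]
        split_ifs with hc
        · subst hc; omega
        · omega
      rw [hadd, ← map_nsmul (monomial s) (s i) a]
      congr 1
      rw [nsmul_eq_mul]
      ring
  rw [Finset.sum_congr rfl fun i _ => hterm i, ← Finset.sum_smul, ← degree_eq_sum_univ]

/-- Euler's identity. -/
lemma euler_identity {m d : ℕ} {f : MvPolynomial (Fin m) ℂ} (hf : f.IsHomogeneous d) :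
    ∑ i : Fin m, X i * pderiv i f = d • f := by
  conv_lhs => rw [f.as_sum]
  simp only [map_sum, Finset.mul_sum]
  rw [Finset.sum_comm]
  conv_rhs => rw [f.as_sum, Finset.smul_sum]
  refine Finset.sum_congr rfl fun s hs => ?_
  rw [euler_monomial]
  congr 1
  rw [Finsupp.degree_eq_weight_one]
  exact hf (MvPolynomial.mem_support_iff.mp hs)

/-- The evaluated form of Euler's identity. -/
lemma euler_eval {m d : ℕ} {f : MvPolynomial (Fin m) ℂ} (hf : f.IsHomogeneous d)
    (P : Fin m → ℂ) :
    ∑ i : Fin m, P i * eval P (pderiv i f) = (d : ℂ) * eval P f := by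
  have := congrArg (eval P) (euler_identity hf)
  simpa [nsmul_eq_mul] using this

/-- Partial derivatives of homogeneous polynomials are homogeneous. -/
lemma isHomogeneous_pderiv {m d : ℕ} {f : MvPolynomial (Fin m) ℂ}
    (hf : f.IsHomogeneous d) (i : Fin m) : (pderiv i f).IsHomogeneous (d - 1) := by
  classical
  have : pderiv i f = ∑ s ∈ f.support, pderiv i (monomial s (coeff s f)) := by
    conv_lhs => rw [f.as_sum]
    rw [map_sum]
  rw [this]
  refine MvPolynomial.IsHomogeneous.sum _ _ _ fun s hs => ?_
  rw [pderiv_monomial]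
  by_cases h : s i = 0
  · simp only [h, Nat.cast_zero, mul_zero, map_zero]
    exact MvPolynomial.isHomogeneous_zero _ _ _
  · refine MvPolynomial.isHomogeneous_monomial _ ?_
    rw [degree_sub_single s i h]
    have hdeg : s.degree = d := by
      rw [Finsupp.degree_eq_weight_one]
      exact hf (MvPolynomial.mem_support_iff.mp hs)
    rw [hdeg]

end Aux

open Matrix

set_option maxHeartbeats 1600000 in
set_option synthInstance.maxHeartbeats 400000 in
/-- Let `f` be homogeneous of degree `d ≥ 3` and `P` a smooth point of
`X = V(f)`.  Then `P` is a parabolic point — the restriction of the Hessian bilinear form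
`B_P` to the tangent space `T_P` has rank `< n - 1` (the second fundamental form quadric
is degenerate) — if and only if `h(f)(P) = 0`, i.e. `P` lies on the Hessian hypersurface.
Hence the parabolic locus together with the singular locus is `X ∩ V(h(f))`. -/
theorem parabolic_iff_hessianPoly_eq_zero (n d : ℕ) (hd : 3 ≤ d)
    (f : MvPolynomial (Fin (n + 1)) ℂ) (hhom : f.IsHomogeneous d)
    (P : Fin (n + 1) → ℂ) (hP : P ≠ 0) (hfP : eval P f = 0)
    (hsm : ∃ i, eval P (pderiv i f) ≠ 0) :
    bilinRank ((hessianForm n f P).restrict (tangentSpace n f P)) < n - 1 ↔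
      eval P (hessianPoly n f) = 0 := by
  classical
  obtain ⟨i₀, hi₀⟩ := hsm
  set g : Fin (n + 1) → ℂ := fun i => eval P (pderiv i f) with hg
  set Mm : Matrix (Fin (n + 1)) (Fin (n + 1)) ℂ := (hessianMatrix n f).map (eval P) with hMm
  have hMsymm : ∀ i j, Mm i j = Mm j i := by
    intro i j
    simp only [hMm, Matrix.map_apply, hessianMatrix]
    rw [pderiv_pderiv_comm]
  set T := tangentSpace n f P with hT
  set B := hessianForm n f P with hB
  have hBapp : ∀ v w, B v w = v ⬝ᵥ Mm *ᵥ w := fun v w =>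
    Matrix.toBilin'_apply' ((hessianMatrix n f).map (eval P)) v w
  have memT : ∀ v, v ∈ T ↔ ∑ i, v i * g i = 0 := fun v => Iff.rfl
  set c : ℂ := ((d - 1 : ℕ) : ℂ) with hc
  have hcne : c ≠ 0 := by
    rw [hc, Nat.cast_ne_zero]
    omega
  have hPT : P ∈ T := by
    rw [memT]
    rw [hg]
    simp only
    rw [euler_eval hhom P, hfP, mul_zero]
  have hrow : ∀ j, ∑ i, P i * Mm i j = c * g j := by
    intro j
    have h := euler_eval (isHomogeneous_pderiv hhom j) P
    simpa [hMm, Matrix.map_apply, hessianMatrix, hc, hg] using h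
  have hBP : ∀ w, B P w = c * ∑ j, w j * g j := by
    intro w
    rw [hBapp, Matrix.dotProduct_mulVec]
    simp only [Matrix.vecMul, dotProduct]
    calc ∑ j, (∑ i, P i * Mm i j) * w j = ∑ j, (c * g j) * w j := by
          refine Finset.sum_congr rfl fun j _ => ?_
          rw [hrow j]
      _ = c * ∑ j, w j * g j := by
          rw [Finset.mul_sum]
          exact Finset.sum_congr rfl fun j _ => by ring
  have hBsymm : ∀ v w, B v w = B w v := by
    intro v w
    rw [hBapp, hBapp]
    simp only [Matrix.mulVec, dotProduct, Finset.mul_sum]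
    rw [Finset.sum_comm]
    refine Finset.sum_congr rfl fun j _ => Finset.sum_congr rfl fun i _ => ?_
    rw [hMsymm i j]
    ring
  set w₀ : Fin (n + 1) → ℂ := Pi.single i₀ 1 with hw₀
  have hℓw₀ : ∑ j, w₀ j * g j = g i₀ := by
    simp [hw₀, Pi.single_apply]
  have hgi₀ : g i₀ ≠ 0 := hi₀
  set L : (Fin (n + 1) → ℂ) →ₗ[ℂ] ℂ :=
    { toFun := fun v => ∑ i, v i * g i
      map_add' := by
        intro a b
        simp only [Pi.add_apply, add_mul, Finset.sum_add_distrib]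
      map_smul' := by
        intro r a
        simp only [Pi.smul_apply, smul_eq_mul, mul_assoc, ← Finset.mul_sum, RingHom.id_apply] }
    with hL
  have hLapp : ∀ v, L v = ∑ i, v i * g i := fun v => rfl
  have hTker : T = LinearMap.ker L := by
    ext v
    rw [memT, LinearMap.mem_ker, hLapp]
  have hrngL : LinearMap.range L = ⊤ := by
    rw [LinearMap.range_eq_top]
    intro x
    refine ⟨(x * (g i₀)⁻¹) • w₀, ?_⟩
    rw [_root_.map_smul, hLapp, hℓw₀, smul_eq_mul]
    field_simp
  have hfinT : Module.finrank ℂ T = n := by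
    have h1 := LinearMap.finrank_range_add_finrank_ker L
    rw [hrngL, finrank_top, Module.finrank_pi, Fintype.card_fin, Module.finrank_self] at h1
    rw [hTker]
    omega
  set B' := B.restrict T with hB'
  have hB'app : ∀ (v w : T), B' v w = B (v : Fin (n + 1) → ℂ) w := by
    intro v w
    rw [hB']
    rfl
  have hranknull : bilinRank B' + Module.finrank ℂ (LinearMap.ker B') = n := by
    have h2 := LinearMap.finrank_range_add_finrank_ker B'
    rw [hfinT] at h2
    exact h2
  have hdetiff : eval P (hessianPoly n f) = Mm.det := by
    rw [hessianPoly, hMm]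
    exact RingHom.map_det (eval P) _
  rw [hdetiff]
  set pT : T := ⟨P, hPT⟩ with hpT
  have hpT0 : pT ≠ 0 := fun h => hP (congrArg Subtype.val h)
  constructor
  · -- rank < n - 1 → det = 0
    intro hrank
    by_contra hdet
    have hnd : Mm.Nondegenerate := Matrix.nondegenerate_of_det_ne_zero hdet
    have hker_le : LinearMap.ker B' ≤ Submodule.span ℂ {pT} := by
      rintro ⟨v, hvT⟩ hvker
      rw [LinearMap.mem_ker] at hvker
      have hvw : ∀ (w : Fin (n + 1) → ℂ), w ∈ T → B v w = 0 := by
        intro w hw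
        have h0 := DFunLike.congr_fun hvker (⟨w, hw⟩ : T)
        rw [hB'app] at h0
        simpa using h0
      set lam : ℂ := B v w₀ / (c * g i₀) with hlam
      have hu : ∀ w, B (v - lam • P) w = 0 := by
        intro w
        set t : ℂ := (∑ j, w j * g j) / g i₀ with ht
        have hw'mem : (w - t • w₀) ∈ T := by
          rw [memT]
          have expand : ∀ j, (w - t • w₀) j * g j = w j * g j - t * (w₀ j * g j) := by
            intro j
            simp only [Pi.sub_apply, Pi.smul_apply, smul_eq_mul]
            ring
          rw [Finset.sum_congr rfl fun j _ => expand j, Finset.sum_sub_distrib,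
            ← Finset.mul_sum, hℓw₀, ht]
          field_simp
          simp
        have hBvw : B v w = t * B v w₀ := by
          have h0 := hvw _ hw'mem
          rwa [_root_.map_sub, _root_.map_smul, smul_eq_mul, sub_eq_zero] at h0
        have hBPw : B P w = c * t * g i₀ := by
          rw [hBP w, ht]
          field_simp
        have hexp : B (v - lam • P) w = B v w - lam * B P w := by
          simp only [_root_.map_sub, _root_.map_smul, LinearMap.sub_apply, LinearMap.smul_apply, smul_eq_mul]
        rw [hexp, hBvw, hBPw, hlam]
        field_simp
        ring
      have hu0 : v - lam • P = 0 := by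
        refine hnd.eq_zero_of_ortho fun w => ?_
        rw [← hBapp]
        exact hu w
      have hveq : v = lam • P := by rwa [sub_eq_zero] at hu0
      refine Submodule.mem_span_singleton.mpr ⟨lam, ?_⟩
      apply Subtype.ext
      simp [hpT, hveq]
    have hspan1 : Module.finrank ℂ (Submodule.span ℂ ({pT} : Set T)) = 1 :=
      finrank_span_singleton hpT0
    have hnull_le : Module.finrank ℂ (LinearMap.ker B') ≤ 1 := by
      have hle := Submodule.finrank_mono hker_le
      omega
    omega
  · -- det = 0 → rank < n - 1
    intro hdet
    obtain ⟨v, hv0, hvM⟩ := Matrix.exists_mulVec_eq_zero_iff.mpr hdet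
    have hBv : ∀ w, B v w = 0 := by
      intro w
      rw [hBsymm, hBapp, hvM, dotProduct_zero]
    have hvT : v ∈ T := by
      rw [memT]
      have h1 : B P v = c * ∑ j, v j * g j := hBP v
      have h2 : B P v = 0 := by rw [hBsymm]; exact hBv P
      rw [h2] at h1
      exact (mul_eq_zero.mp h1.symm).resolve_left hcne
    set vT : T := ⟨v, hvT⟩ with hvTdef
    have hvker : vT ∈ LinearMap.ker B' := by
      rw [LinearMap.mem_ker]
      refine LinearMap.ext fun w => ?_
      rw [hB'app, LinearMap.zero_apply]
      exact hBv w
    have hpker : pT ∈ LinearMap.ker B' := by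
      rw [LinearMap.mem_ker]
      refine LinearMap.ext fun w => ?_
      rw [hB'app, LinearMap.zero_apply, hBP]
      have hw : ∑ j, (w : Fin (n + 1) → ℂ) j * g j = 0 := (memT _).mp w.2
      rw [hw, mul_zero]
    have hBPw₀ : B P w₀ ≠ 0 := by
      rw [hBP, hℓw₀]
      exact mul_ne_zero hcne hgi₀
    clear_value B' B Mm T g c w₀ L
    have hspan_le : Submodule.span ℂ ({pT} : Set T) ≤ LinearMap.ker B' := by
      rw [Submodule.span_singleton_le_iff_mem]
      exact hpker
    have hvnot : vT ∉ Submodule.span ℂ ({pT} : Set T) := by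
      intro hmem
      obtain ⟨a, ha⟩ := Submodule.mem_span_singleton.mp hmem
      have hav : a • P = v := by
        have h' := congrArg Subtype.val ha
        simpa using h'
      have h1 : B v w₀ = a * B P w₀ := by
        rw [← hav, _root_.map_smul, LinearMap.smul_apply, smul_eq_mul]
      rw [hBv w₀] at h1
      have ha0 : a = 0 := (mul_eq_zero.mp h1.symm).resolve_right hBPw₀
      rw [ha0, zero_smul] at hav
      exact hv0 hav.symm
    have hlt : Submodule.span ℂ ({pT} : Set T) < LinearMap.ker B' := by
      refine lt_of_le_of_ne hspan_le ?_
      intro h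
      rw [h] at hvnot
      exact hvnot hvker
    have h2le : 2 ≤ Module.finrank ℂ (LinearMap.ker B') := by
      have hfr := Submodule.finrank_lt_finrank_of_lt hlt
      rw [finrank_span_singleton hpT0] at hfr
      omega
    omega
end

section
/- (Segre's theorem.) Let f be an irreducible homogeneous polynomial of degree d ≥ 3 in the n+1 variables x_0,…,x_n over ℂ, and let 1 ≤ h ≤ n−1. Suppose every smooth point P of the hypersurface X = V(f) is h-parabolic, i.e. the evaluated Hessian matrix H(f)(P) has rank n − h + 1 (equivalently, the second fundamental form II_P has rank n − h − 1). Then f^h divides the Hessian polynomial h(f) = det H(f); that is, X is an h-tuple component of its Hessian. -/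
open MvPolynomial

namespace SegreAux

open Matrix Module Submodule


/-! ### Finsupp degree helpers -/

lemma degree_single {σ : Type*} (i : σ) (k : ℕ) : (Finsupp.single i k).degree = k := by
  classical
  rcases eq_or_ne k 0 with rfl | hk
  · simp
  · rw [Finsupp.degree_apply, Finsupp.support_single_ne_zero _ hk, Finset.sum_singleton,
      Finsupp.single_eq_same]

lemma degree_add {σ : Type*} (a b : σ →₀ ℕ) : (a + b).degree = a.degree + b.degree := by
  simp only [Finsupp.degree_eq_weight_one, map_add]

lemma degree_eq_sum {σ : Type*} (s : σ →₀ ℕ) : (s.sum fun _ e => e) = s.degree := rfl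

/-! ### coefficients of partial derivatives -/

lemma coeff_pderiv {σ K : Type*} [DecidableEq σ] [CommSemiring K] (i : σ) (m : σ →₀ ℕ)
    (p : MvPolynomial σ K) :
    coeff m (pderiv i p) = ((m i + 1 : ℕ) : K) * coeff (m + Finsupp.single i 1) p := by
  induction p using MvPolynomial.induction_on' with
  | add p q hp hq => simp [hp, hq, mul_add]
  | monomial u a =>
    rw [pderiv_monomial, coeff_monomial, coeff_monomial]
    by_cases hcase : u = m + Finsupp.single i 1
    · subst hcase
      rw [if_pos (add_tsub_cancel_right m (Finsupp.single i 1)), if_pos rfl]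
      have : ((m + Finsupp.single i 1) : σ →₀ ℕ) i = m i + 1 := by
        rw [Finsupp.add_apply, Finsupp.single_eq_same]
      rw [this, mul_comm]
    · rw [if_neg hcase, mul_zero]
      split_ifs with h2
      · by_cases hui : u i = 0
        · rw [hui]; simp
        · exfalso
          apply hcase
          have hle : Finsupp.single i 1 ≤ u := by
            rw [Finsupp.single_le_iff]
            omega
          rw [← h2, tsub_add_cancel_of_le hle]
      · rfl



variable {F : Type*} [Field F]

lemma det_eq_zero_of_rank_lt {k : ℕ} (B : Matrix (Fin k) (Fin k) F) (hr : B.rank < k) :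
    B.det = 0 := by
  by_contra hdet
  have := B.rank_of_isUnit (B.isUnit_iff_isUnit_det.mpr (isUnit_iff_ne_zero.mpr hdet))
  rw [this, Fintype.card_fin] at hr
  omega

lemma rank_submatrix_le'' {N s : ℕ} (A : Matrix (Fin N) (Fin N) F)
    (ρ σf : Fin s → Fin N) : (A.submatrix ρ σf).rank ≤ A.rank := by
  calc (A.submatrix ρ σf).rank
      = finrank F (span F (Set.range (A.submatrix ρ σf)ᵀ)) := rank_eq_finrank_span_cols _
    _ ≤ finrank F (span F ((LinearMap.funLeft F F ρ) '' (Set.range Aᵀ))) := by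
        apply Submodule.finrank_mono
        apply Submodule.span_mono
        rintro _ ⟨j, rfl⟩
        exact ⟨Aᵀ (σf j), ⟨σf j, rfl⟩, rfl⟩
    _ = finrank F (Submodule.map (LinearMap.funLeft F F ρ) (span F (Set.range Aᵀ))) := by
        rw [Submodule.span_image]
    _ ≤ finrank F (span F (Set.range Aᵀ)) := Submodule.finrank_map_le _ _
    _ = A.rank := (rank_eq_finrank_span_cols _).symm

lemma det_submatrix_eq_zero {N s : ℕ} (A : Matrix (Fin N) (Fin N) F)
    (hr : A.rank < s) (ρ σf : Fin s → Fin N) : (A.submatrix ρ σf).det = 0 :=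
  det_eq_zero_of_rank_lt _ (lt_of_le_of_lt (rank_submatrix_le'' A ρ σf) hr)

lemma exists_indep_cols {N M s : ℕ} (B : Matrix (Fin N) (Fin M) F) (hs : s ≤ B.rank) :
    ∃ σf : Fin s → Fin M, Function.Injective σf ∧
      LinearIndependent F (fun j => Bᵀ (σf j)) := by
  classical
  obtain ⟨b, hbsub, hbspan, hbind⟩ := exists_linearIndependent F (Set.range Bᵀ)
  have hfin : b.Finite := (Set.finite_range Bᵀ).subset hbsub
  haveI := hfin.fintype
  have hcard : s ≤ Fintype.card b := by
    have h1 : B.rank = finrank F (span F b) := by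
      rw [rank_eq_finrank_span_cols, hbspan]; rfl
    have h2 : finrank F (span F b) = b.toFinset.card := finrank_span_set_eq_card hbind
    rw [h1, h2, Set.toFinset_card] at hs
    exact hs
  obtain ⟨u⟩ : Nonempty (Fin s ↪ b) := by
    rw [Function.Embedding.nonempty_iff_card_le, Fintype.card_fin]
    exact hcard
  have hchoice : ∀ x : b, ∃ j, Bᵀ j = (x : Fin N → F) := fun x => hbsub x.2
  choose idx hidx using hchoice
  refine ⟨fun j => idx (u j), ?_, ?_⟩
  · intro j k hjk
    apply u.injective
    apply Subtype.ext
    rw [← hidx (u j), ← hidx (u k)]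
    exact congrArg Bᵀ hjk
  · have : (fun j => Bᵀ (idx (u j))) = (fun x : b => (x : Fin N → F)) ∘ u := by
      funext j
      simp [hidx (u j)]
    rw [this]
    exact hbind.comp u u.injective

lemma rank_lt_of_minors {N s : ℕ} (A : Matrix (Fin N) (Fin N) F)
    (hm : ∀ ρ σf : Fin s → Fin N, Function.Injective ρ → Function.Injective σf →
      (A.submatrix ρ σf).det = 0) :
    A.rank < s := by
  classical
  by_contra hlt
  push_neg at hlt
  obtain ⟨σf, hσinj, hσind⟩ := exists_indep_cols A hlt
  set M1 : Matrix (Fin N) (Fin s) F := A.submatrix id σf with hM1def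
  have hM1 : M1.rank = s := by
    rw [rank_eq_finrank_span_cols]
    have he : M1ᵀ = fun j => Aᵀ (σf j) := rfl
    rw [show M1.col = fun j => Aᵀ (σf j) from rfl, finrank_span_eq_card hσind, Fintype.card_fin]
  have hM1t : s ≤ (M1ᵀ).rank := by
    rw [M1.rank_transpose, hM1]
  obtain ⟨ρ, hρinj, hρind⟩ := exists_indep_cols M1ᵀ hM1t
  rw [transpose_transpose] at hρind
  have hdet := hm ρ σf hρinj hσinj
  obtain ⟨v, hv0, hv⟩ := exists_vecMul_eq_zero_iff.mpr hdet
  have hrows : LinearIndependent F (fun i => (A.submatrix ρ σf) i) := by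
    have he2 : (fun i => (A.submatrix ρ σf) i) = fun i => M1 (ρ i) := rfl
    rw [he2]
    exact hρind
  have hsum : (∑ i, v i • (A.submatrix ρ σf) i) = v ᵥ* (A.submatrix ρ σf) := by
    funext k
    simp [Matrix.vecMul, dotProduct, Finset.sum_apply, mul_comm]
  have := Fintype.linearIndependent_iff.mp hrows v (by rw [hsum, hv])
  exact hv0 (funext this)

lemma rank_updateCol_le {N : ℕ} (B : Matrix (Fin N) (Fin N) F) (j : Fin N) (v : Fin N → F) :
    (B.updateCol j v).rank ≤ B.rank + 1 := by
  classical
  set w : Fin N → F := v - (fun i => B i j) with hw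
  have hdiff : ∀ x : Fin N → F, (B.updateCol j v) *ᵥ x = B *ᵥ x + x j • w := by
    intro x
    funext i
    have hkey : ((B.updateCol j v) *ᵥ x) i - (B *ᵥ x) i = x j * (v i - B i j) := by
      simp only [Matrix.mulVec, dotProduct, updateCol_apply]
      rw [← Finset.sum_sub_distrib, Finset.sum_eq_single j]
      · rw [if_pos rfl]; ring
      · intro k _ hk; rw [if_neg hk]; ring
      · intro hj; exact absurd (Finset.mem_univ j) hj
    rw [eq_add_of_sub_eq hkey]
    simp only [hw, Pi.add_apply, Pi.smul_apply, Pi.sub_apply, smul_eq_mul]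
    ring
  have hrange : LinearMap.range (B.updateCol j v).mulVecLin ≤
      LinearMap.range B.mulVecLin ⊔ span F {w} := by
    rintro y ⟨x, rfl⟩
    rw [mulVecLin_apply, hdiff x]
    exact Submodule.add_mem _ (Submodule.mem_sup_left ⟨x, rfl⟩)
      (Submodule.mem_sup_right (Submodule.smul_mem _ _ (Submodule.mem_span_singleton_self w)))
  calc (B.updateCol j v).rank
      ≤ finrank F ↑(LinearMap.range B.mulVecLin ⊔ span F {w}) :=
        Submodule.finrank_mono hrange
    _ ≤ finrank F ↑(LinearMap.range B.mulVecLin) + finrank F ↑(span F {w}) :=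
        Submodule.finrank_add_le_finrank_add_finrank _ _
    _ ≤ B.rank + 1 := by
        apply add_le_add le_rfl
        by_cases hw0 : w = 0
        · rw [hw0, Submodule.span_zero_singleton]
          simp
        · rw [finrank_span_singleton hw0]



/-- If a nonzero polynomial is divisible by a homogeneous polynomial of degree `d`,
then its total degree is at least `d`. -/
lemma le_totalDegree_of_homog_dvd {σ : Type*} {f g : MvPolynomial σ ℂ} {d : ℕ}
    (hf : f.IsHomogeneous d) (hg : g ≠ 0) (hdvd : f ∣ g) : d ≤ g.totalDegree := by
  classical
  obtain ⟨q, rfl⟩ := hdvd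
  have hf0 : f ≠ 0 := left_ne_zero_of_mul hg
  have hq0 : q ≠ 0 := right_ne_zero_of_mul hg
  set e := q.totalDegree with he
  have hcomp_ne : homogeneousComponent e q ≠ 0 := by
    obtain ⟨s, hs_mem, hs_eq⟩ := q.support.exists_mem_eq_sup
      (MvPolynomial.support_nonempty.mpr hq0) (fun s => s.sum fun _ k => k)
    have hsdeg : s.degree = e := by
      rw [he, MvPolynomial.totalDegree, hs_eq, degree_eq_sum]
    intro hzero
    have := coeff_homogeneousComponent (σ := σ) (R := ℂ) e q s
    rw [hzero, if_pos hsdeg] at this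
    exact (MvPolynomial.mem_support_iff.mp hs_mem) this.symm
  have key : homogeneousComponent (d + e) (f * q) = f * homogeneousComponent e q := by
    conv_lhs => rw [← sum_homogeneousComponent q, Finset.mul_sum, map_sum]
    rw [Finset.sum_eq_single e]
    · rw [homogeneousComponent_of_mem
        ((mem_homogeneousSubmodule _ _).mpr (hf.mul (homogeneousComponent_isHomogeneous e q))),
        if_pos rfl]
    · intro i _ hne
      rw [homogeneousComponent_of_mem
        ((mem_homogeneousSubmodule _ _).mpr (hf.mul (homogeneousComponent_isHomogeneous i q))),
        if_neg (fun hcon => hne (by omega))]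
    · intro hnotmem
      exact absurd (Finset.self_mem_range_succ e) hnotmem
  have hne : homogeneousComponent (d + e) (f * q) ≠ 0 := by
    rw [key]
    exact mul_ne_zero hf0 hcomp_ne
  have : ¬ (f * q).totalDegree < d + e := fun hlt => hne (homogeneousComponent_eq_zero _ _ hlt)
  omega

/-- The total degree of a partial derivative of a homogeneous polynomial of degree `d`
is at most `d - 1`. -/
lemma totalDegree_pderiv_le {n : ℕ} {f : MvPolynomial (Fin n) ℂ} {d : ℕ}
    (hhom : f.IsHomogeneous d) (i : Fin n) :
    (pderiv i f).totalDegree ≤ d - 1 := by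
  rw [MvPolynomial.totalDegree]
  apply Finset.sup_le
  intro s hs
  have hco : coeff s (pderiv i f) ≠ 0 := MvPolynomial.mem_support_iff.mp hs
  rw [coeff_pderiv] at hco
  have hco2 : coeff (s + Finsupp.single i 1) f ≠ 0 := right_ne_zero_of_mul hco
  have hdeg : (s + Finsupp.single i 1).degree = d := by
    by_contra hne
    exact hco2 (hhom.coeff_eq_zero hne)
  rw [degree_add, degree_single] at hdeg
  rw [degree_eq_sum]
  omega

/-- A polynomial vanishing at all smooth points of the irreducible hypersurface `V(f)`
is divisible by `f`. -/
lemma dvd_of_vanishing (n d : ℕ) (hd : 3 ≤ d) (f : MvPolynomial (Fin (n + 1)) ℂ)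
    (hirr : Irreducible f) (hhom : f.IsHomogeneous d) (g : MvPolynomial (Fin (n + 1)) ℂ)
    (hval : ∀ P : Fin (n + 1) → ℂ, P ≠ 0 → eval P f = 0 →
      (∃ i, eval P (pderiv i f) ≠ 0) → eval P g = 0) :
    f ∣ g := by
  classical
  have hf0 : f ≠ 0 := hirr.ne_zero
  have hprime : Prime f := UniqueFactorizationMonoid.irreducible_iff_prime.mp hirr
  have hspan : (Ideal.span {f} : Ideal (MvPolynomial (Fin (n + 1)) ℂ)).IsPrime :=
    (Ideal.span_singleton_prime hf0).mpr hprime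
  have hconst : ∀ i, constantCoeff (pderiv i f) = 0 := by
    intro i
    rw [constantCoeff_eq]
    show coeff 0 (pderiv i f) = 0
    rw [coeff_pderiv, hhom.coeff_eq_zero (by rw [degree_add, map_zero, degree_single]; omega),
      mul_zero]
  have hstep : ∀ i, f ∣ g * pderiv i f := by
    intro i
    rw [← Ideal.mem_span_singleton, ← hspan.radical, ← vanishingIdeal_zeroLocus_eq_radical (K := ℂ),
      mem_vanishingIdeal_iff]
    intro x hx
    change eval x (g * pderiv i f) = 0
    have hfx : eval x f = 0 := (mem_zeroLocus_iff.mp hx) f (Ideal.subset_span rfl)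
    by_cases hder : ∃ k, eval x (pderiv k f) ≠ 0
    · by_cases hx0 : x = 0
      · obtain ⟨k, hk⟩ := hder
        subst hx0
        rw [show (eval (0 : Fin (n+1) → ℂ) : MvPolynomial (Fin (n+1)) ℂ →+* ℂ) = constantCoeff
          from MvPolynomial.eval_zero] at hk
        exact absurd (hconst k) hk
      · rw [_root_.map_mul, hval x hx0 hfx hder, zero_mul]
    · push_neg at hder
      rw [_root_.map_mul, hder i, mul_zero]
  by_contra hnd
  have hdiv : ∀ i, f ∣ pderiv i f := fun i => (hprime.2.2 _ _ (hstep i)).resolve_left hnd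
  -- find a nonzero partial derivative
  obtain ⟨s, hs_mem⟩ := MvPolynomial.support_nonempty.mpr hf0
  have hcoeff : coeff s f ≠ 0 := MvPolynomial.mem_support_iff.mp hs_mem
  have hsdeg : s.degree = d := by
    by_contra hne
    exact hcoeff (hhom.coeff_eq_zero hne)
  have hs_ne : s ≠ 0 := by
    intro h0
    rw [h0, map_zero] at hsdeg
    omega
  obtain ⟨i0, hi0⟩ : ∃ i0, s i0 ≠ 0 := by
    by_contra hall
    push_neg at hall
    exact hs_ne (Finsupp.ext hall)
  have hle : Finsupp.single i0 1 ≤ s := by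
    rw [Finsupp.single_le_iff]
    omega
  have hms : (s - Finsupp.single i0 1) + Finsupp.single i0 1 = s := tsub_add_cancel_of_le hle
  have hpne : pderiv i0 f ≠ 0 := by
    intro hzero
    have := coeff_pderiv i0 (s - Finsupp.single i0 1) f
    rw [hzero, hms] at this
    simp only [MvPolynomial.coeff_zero] at this
    have : coeff s f = 0 := by
      rcases mul_eq_zero.mp this.symm with hcase | hcase
      · exact absurd hcase (Nat.cast_ne_zero.mpr (by omega))
      · exact hcase
    exact hcoeff this
  have hle1 : d ≤ (pderiv i0 f).totalDegree :=
    le_totalDegree_of_homog_dvd hhom hpne (hdiv i0)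
  have hle2 := totalDegree_pderiv_le hhom i0
  omega

/-- Key lemma: if the rank of `M` modulo the prime `p` is at most `N - t`, then
`p ^ t` divides `det M`. -/
lemma pow_dvd_det {R : Type*} [CommRing R] [IsDomain R] {p : R} (hp : Prime p)
    [hsp : (Ideal.span {p} : Ideal R).IsPrime] {N : ℕ} (t : ℕ) :
    ∀ M : Matrix (Fin N) (Fin N) R,
      (M.map ⇑((algebraMap (R ⧸ Ideal.span {p}) (FractionRing (R ⧸ Ideal.span {p}))).comp
        (Ideal.Quotient.mk (Ideal.span {p})))).rank + t ≤ N →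
      p ^ t ∣ M.det := by
  classical
  set A := R ⧸ Ideal.span {p} with hA
  set K := FractionRing A with hK
  set φ : R →+* K := (algebraMap A K).comp (Ideal.Quotient.mk (Ideal.span {p})) with hφ
  have hker : ∀ a : R, φ a = 0 ↔ p ∣ a := by
    intro a
    rw [hφ, RingHom.comp_apply, IsFractionRing.to_map_eq_zero_iff,
      Ideal.Quotient.eq_zero_iff_mem, Ideal.mem_span_singleton]
  induction t with
  | zero => intro M _; simp
  | succ t ih =>
    intro M hrank
    have hlt : (M.map ⇑φ).rank < N := by omega
    have hdet : (M.map ⇑φ).det = 0 := det_eq_zero_of_rank_lt _ hlt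
    obtain ⟨c, hc0, hc⟩ := Matrix.exists_mulVec_eq_zero_iff.mpr hdet
    obtain ⟨b, hb⟩ := IsLocalization.exist_integer_multiples
      (nonZeroDivisors A) Finset.univ c
    choose dd hdd using fun i => hb i (Finset.mem_univ i)
    choose e he using fun i => Ideal.Quotient.mk_surjective (I := Ideal.span {p}) (dd i)
    have hbK : algebraMap A K (b : A) ≠ 0 := fun h0 =>
      nonZeroDivisors.ne_zero b.2 ((IsFractionRing.to_map_eq_zero_iff (K := K)).mp h0)
    have hMe : ∀ i, p ∣ (M *ᵥ e) i := by
      intro i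
      rw [← hker]
      have : φ ((M *ᵥ e) i) = algebraMap A K (b : A) * (((M.map ⇑φ) *ᵥ c) i) := by
        simp only [Matrix.mulVec, dotProduct, map_sum, _root_.map_mul, Finset.mul_sum]
        apply Finset.sum_congr rfl
        intro k _
        have hek : φ (e k) = algebraMap A K (dd k) := by
          rw [hφ, RingHom.comp_apply, he k]
        rw [hek, hdd k, Algebra.smul_def, Matrix.map_apply]
        ring
      rw [this, hc]
      simp
    choose w hw using hMe
    obtain ⟨j, hj⟩ : ∃ j, c j ≠ 0 := by
      by_contra hall
      push_neg at hall
      exact hc0 (funext hall)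
    have hej : ¬ p ∣ e j := by
      rw [← hker]
      intro h0
      have : φ (e j) = algebraMap A K (dd j) := by rw [hφ, RingHom.comp_apply, he j]
      rw [this, hdd j, Algebra.smul_def] at h0
      exact hj (by
        rcases mul_eq_zero.mp h0 with hcase | hcase
        · exact absurd hcase hbK
        · exact hcase)
    have hcramer : (M.updateCol j (M *ᵥ e)).det = M.det * e j := by
      rw [← cramer_apply, cramer_eq_adjugate_mulVec, mulVec_mulVec, adjugate_mul,
        smul_mulVec, one_mulVec]
      simp [smul_eq_mul]
    have hMe_eq : M *ᵥ e = p • w := by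
      funext i
      rw [hw i]
      simp [smul_eq_mul]
    have hupdate : (M.updateCol j (M *ᵥ e)).det = p * (M.updateCol j w).det := by
      rw [hMe_eq, det_updateCol_smul]
    have hrank' : ((M.updateCol j w).map ⇑φ).rank + t ≤ N := by
      rw [Matrix.map_updateCol]
      have := rank_updateCol_le (M.map ⇑φ) j (⇑φ ∘ w)
      omega
    have ht := ih (M.updateCol j w) hrank'
    have hfinal : p ^ (t + 1) ∣ M.det * e j := by
      rw [← hcramer, hupdate, pow_succ']
      exact mul_dvd_mul_left p ht
    exact hp.pow_dvd_of_dvd_mul_right (t + 1) hej hfinal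
  

end SegreAux

/-- Segre's theorem: Let `f` be an irreducible homogeneous polynomial of
degree `d ≥ 3` and `1 ≤ h ≤ n - 1`.  If every smooth point `P` of `X = V(f)` is
`h`-parabolic, i.e. the evaluated Hessian matrix `H(f)(P)` has rank `n - h + 1`
(equivalently `rank II_P = n - h - 1`), then `f ^ h` divides the Hessian polynomial
`h(f) = det H(f)`: `X` is an `h`-tuple component of its Hessian. -/
theorem segre_pow_dvd_hessian (n d h : ℕ) (hd : 3 ≤ d) (h1 : 1 ≤ h) (h2 : h ≤ n - 1)
    (f : MvPolynomial (Fin (n + 1)) ℂ) (hirr : Irreducible f) (hhom : f.IsHomogeneous d)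
    (hpar : ∀ P : Fin (n + 1) → ℂ, P ≠ 0 → eval P f = 0 →
      (∃ i, eval P (pderiv i f) ≠ 0) →
      ((hessianMatrix n f).map (eval P)).rank = n - h + 1) :
    f ^ h ∣ hessianPoly n f := by
  classical
  have hf0 : f ≠ 0 := hirr.ne_zero
  have hp : Prime f := UniqueFactorizationMonoid.irreducible_iff_prime.mp hirr
  haveI hspan : (Ideal.span {f} : Ideal (MvPolynomial (Fin (n + 1)) ℂ)).IsPrime :=
    (Ideal.span_singleton_prime hf0).mpr hp
  set H := hessianMatrix n f with hH
  have hminor : ∀ ρ σf : Fin (n - h + 2) → Fin (n + 1), Function.Injective ρ →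
      Function.Injective σf → f ∣ (H.submatrix ρ σf).det := by
    intro ρ σf hρ hσ
    apply SegreAux.dvd_of_vanishing n d hd f hirr hhom
    intro P hP0 hPf hPs
    have hr1 := hpar P hP0 hPf hPs
    have hr2 : ((hessianMatrix n f).map (eval P)).rank < n - h + 2 := by rw [hr1]; omega
    have hr3 : eval P ((H.submatrix ρ σf).det) =
        (((hessianMatrix n f).map (eval P)).submatrix ρ σf).det := by
      rw [RingHom.map_det]
      rfl
    rw [hr3]
    exact SegreAux.det_submatrix_eq_zero _ hr2 ρ σf
  set A := MvPolynomial (Fin (n + 1)) ℂ ⧸ Ideal.span {f} with hA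
  set K := FractionRing A with hK
  set φ : MvPolynomial (Fin (n + 1)) ℂ →+* K :=
    (algebraMap A K).comp (Ideal.Quotient.mk (Ideal.span {f})) with hφ
  have hker2 : ∀ a, f ∣ a → φ a = 0 := by
    intro a ha
    rw [hφ, RingHom.comp_apply, IsFractionRing.to_map_eq_zero_iff,
      Ideal.Quotient.eq_zero_iff_mem, Ideal.mem_span_singleton]
    exact ha
  have hrankK : (H.map ⇑φ).rank < n - h + 2 := by
    apply SegreAux.rank_lt_of_minors
    intro ρ σf hρ hσ
    have heq : ((H.map ⇑φ).submatrix ρ σf).det = φ ((H.submatrix ρ σf).det) := by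
      rw [RingHom.map_det]
      rfl
    rw [heq]
    exact hker2 _ (hminor ρ σf hρ hσ)
  have hineq : (H.map ⇑φ).rank + h ≤ n + 1 := by omega
  show f ^ h ∣ H.det
  exact SegreAux.pow_dvd_det hp h H hineq
end
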